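/- Let n ≥ 1, θ : Fin n → ℝ, and let π be any permutation of {1,…,n}. The squared Euclidean norm of the Plackett-Luce score vector is uniformly bounded: Σ_{i=1}^n G_i(π)² ≤ n(n−1), where G_i(π) = 1 − Σ_{k=1}^{i} exp(θ_{π_i}) / (Σ_{u=k}^n exp(θ_{π_u})). -/

import Mathlib

open Finset

/-- The Plackett-Luce score component at rank position `i` (in the coordinates
reordered by `π`): `G_i(π) = 1 − Σ_{k=1}^{i} exp(θ_{π_i}) / (Σ_{u=k}^n exp(θ_{π_u}))`. -/
noncomputable def plScore {n : ℕ} (θ : Fin n → ℝ) (π : Equiv.Perm (Fin n)) (i : Fin n) : ℝ :=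
  1 - ∑ k ∈ Finset.univ.filter (fun k => k ≤ i),
        Real.exp (θ (π i)) / ∑ u ∈ Finset.univ.filter (fun u => k ≤ u), Real.exp (θ (π u))

/-- Uniform bound on the squared Euclidean norm of the Plackett-Luce score
vector: `Σ_{i=1}^n G_i(π)² ≤ n(n−1)` for every permutation `π`. -/
theorem plScore_sq_norm_le {n : ℕ} (hn : 1 ≤ n) (θ : Fin n → ℝ)
    (π : Equiv.Perm (Fin n)) :
    ∑ i : Fin n, plScore θ π i ^ 2 ≤ (n : ℝ) * ((n : ℝ) - 1) := by
  set E : Fin n → ℝ := fun i => Real.exp (θ (π i)) with hE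
  set S : Fin n → ℝ := fun k => ∑ u ∈ Finset.univ.filter (fun u => k ≤ u), E u with hS
  have hSpos : ∀ k : Fin n, 0 < S k := by
    intro k
    refine Finset.sum_pos (fun u _ => Real.exp_pos _) ?_
    exact ⟨k, Finset.mem_filter.mpr ⟨Finset.mem_univ k, le_refl k⟩⟩
  have hG : ∀ i, plScore θ π i
      = 1 - ∑ k ∈ Finset.univ.filter (fun k => k ≤ i), E i / S k := fun i => rfl
  -- upper bound: G i ≤ 1
  have hle1 : ∀ i, plScore θ π i ≤ 1 := by
    intro i
    rw [hG]
    have h0 : (0:ℝ) ≤ ∑ k ∈ Finset.univ.filter (fun k => k ≤ i), E i / S k :=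
      Finset.sum_nonneg fun k _ => div_nonneg (Real.exp_pos _).le (hSpos k).le
    linarith
  -- lower bound: G i ≥ 1 - n
  have hgeN : ∀ i, 1 - (n:ℝ) ≤ plScore θ π i := by
    intro i
    rw [hG]
    have h1 : ∑ k ∈ Finset.univ.filter (fun k => k ≤ i), E i / S k
        ≤ ∑ k ∈ Finset.univ.filter (fun k => k ≤ i), (1:ℝ) := by
      refine Finset.sum_le_sum fun k hk => ?_
      rw [div_le_one (hSpos k)]
      exact Finset.single_le_sum (fun u _ => (Real.exp_pos (θ (π u))).le)
        (Finset.mem_filter.mpr ⟨Finset.mem_univ i, (Finset.mem_filter.mp hk).2⟩)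
    have h2 : ∑ k ∈ Finset.univ.filter (fun k => k ≤ i), (1:ℝ)
        = ((Finset.univ.filter (fun k => k ≤ i)).card : ℝ) := by simp
    have h3 : ((Finset.univ.filter (fun k => k ≤ i)).card : ℝ) ≤ (n : ℝ) := by
      have h := Finset.card_le_univ (Finset.univ.filter (fun k => k ≤ i))
      simp only [Finset.card_univ, Fintype.card_fin] at h
      exact_mod_cast h
    linarith
  -- the scores sum to zero
  have hsum0 : ∑ i, plScore θ π i = 0 := by
    have hdbl : ∑ i : Fin n, ∑ k ∈ Finset.univ.filter (fun k => k ≤ i), E i / S k = (n : ℝ) := by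
      have h1 : ∀ i : Fin n, ∑ k ∈ Finset.univ.filter (fun k => k ≤ i), E i / S k
          = ∑ k : Fin n, if k ≤ i then E i / S k else 0 := by
        intro i; rw [Finset.sum_filter]
      simp_rw [h1]
      rw [Finset.sum_comm]
      have h2 : ∀ k : Fin n, ∑ i : Fin n, (if k ≤ i then E i / S k else 0) = 1 := by
        intro k
        have : ∑ i : Fin n, (if k ≤ i then E i / S k else 0)
            = (∑ i ∈ Finset.univ.filter (fun i => k ≤ i), E i) / S k := by
          rw [Finset.sum_div, Finset.sum_filter]
        rw [this]
        exact div_self (hSpos k).ne'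
      simp_rw [h2]
      simp
    have : ∑ i : Fin n, plScore θ π i
        = ∑ i : Fin n, (1:ℝ) - ∑ i : Fin n, ∑ k ∈ Finset.univ.filter (fun k => k ≤ i), E i / S k := by
      rw [← Finset.sum_sub_distrib]
      exact Finset.sum_congr rfl fun i _ => hG i
    rw [this, hdbl]
    simp
  -- pointwise: G² ≤ (2 - n) G + (n - 1)
  have hpt : ∀ i, plScore θ π i ^ 2 ≤ (2 - (n:ℝ)) * plScore θ π i + ((n:ℝ) - 1) := by
    intro i
    have h1 := hle1 i
    have h2 := hgeN i
    nlinarith [mul_nonneg (sub_nonneg.mpr h1) (by linarith : (0:ℝ) ≤ plScore θ π i + ((n:ℝ) - 1))]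
  calc ∑ i : Fin n, plScore θ π i ^ 2
      ≤ ∑ i : Fin n, ((2 - (n:ℝ)) * plScore θ π i + ((n:ℝ) - 1)) :=
        Finset.sum_le_sum fun i _ => hpt i
    _ = (2 - (n:ℝ)) * (∑ i, plScore θ π i) + (n:ℝ) * ((n:ℝ) - 1) := by
        rw [Finset.sum_add_distrib, ← Finset.mul_sum]
        simp [mul_comm]
        ring
    _ = (n : ℝ) * ((n : ℝ) - 1) := by rw [hsum0]; ring
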